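/- Let G be a group such that for every finitely generated projective ℤ[G]-module P, the module ℓ²(G) ⊗_{ℤ[G]} P is a free ℓ²(G)-module of rank equal to the ℤ-rank of ℤ ⊗_{ℤ[G]} P. If Q is a finitely generated projective ℤ[G]-module with Q/IQ = 0 (I the augmentation ideal), then Q = 0. -/

import Mathlib

/-- The augmentation map `ℤ[G] → ℤ`, sending each group element to `1`. -/
noncomputable def aug (G : Type) [Group G] : MonoidAlgebra ℤ G →ₐ[ℤ] ℤ :=
  (MonoidAlgebra.lift ℤ ℤ G) 1

/-- The augmentation ideal `I = ker ε ⊆ ℤ[G]`. -/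
noncomputable def augIdeal (G : Type) [Group G] : Ideal (MonoidAlgebra ℤ G) :=
  RingHom.ker (aug G)

/-- (Lemma 3.1) Let `G` be a group, and let `L` be a ring receiving `ℤ[G]`
(playing the role of `ℓ²(G)`, with its faithful tracial von Neumann trace
`τ`), such that for every finitely generated projective `ℤ[G]`-module `P`
(given as the image of an idempotent matrix `E`), the extension of scalars
`L ⊗_{ℤ[G]} P` (the image of `E` over `L`) is a free `L`-module of rank equal
to the `ℤ`-rank of `ℤ ⊗_{ℤ[G]} P ≅ P/IP`.  If `Q` is a finitely generated
projective `ℤ[G]`-module with `Q/IQ = 0`, then `Q = 0`. -/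
theorem proj_aug_trivial_eq_zero_of_l2_free (G : Type) [Group G]
    (L : Type) [Ring L] (φ : MonoidAlgebra ℤ G →+* L)
    (hφ : Function.Injective φ)
    (τ : L → ℂ)
    (hτ1 : τ 1 = 1)
    (hτtr : ∀ x y : L, τ (x * y) = τ (y * x))
    (hτfaith : ∀ n (e : Matrix (Fin n) (Fin n) L), e * e = e →
        Matrix.trace (e.map τ) = 0 → e = 0)
    (hfree : ∀ (n : ℕ) (E : Matrix (Fin n) (Fin n) (MonoidAlgebra ℤ G)),
        E * E = E →
        Nonempty ((LinearMap.range (E.map φ).vecMulLinear) ≃ₗ[L]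
          (Fin (Module.finrank ℤ
            ((LinearMap.range E.vecMulLinear) ⧸
              (augIdeal G • (⊤ : Submodule (MonoidAlgebra ℤ G)
                (LinearMap.range E.vecMulLinear))))) → L)))
    (Q : Type) [AddCommGroup Q] [Module (MonoidAlgebra ℤ G) Q]
    [Module.Finite (MonoidAlgebra ℤ G) Q]
    [Module.Projective (MonoidAlgebra ℤ G) Q]
    (hIQ : augIdeal G • (⊤ : Submodule (MonoidAlgebra ℤ G) Q) = ⊤) :
    Subsingleton Q := by
  classical
  set R := MonoidAlgebra ℤ G
  -- get a surjection π : (Fin n → R) → Q and a section s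
  obtain ⟨n, π, hπ⟩ := Module.Finite.exists_fin' R Q
  obtain ⟨s, hs⟩ := Module.projective_lifting_property π (LinearMap.id) hπ
  have hs' : ∀ q : Q, π (s q) = q := fun q => congrArg (· q) (congrArg DFunLike.coe hs)
  have hsinj : Function.Injective s := fun a b hab => by
    have := congrArg π hab; rwa [hs', hs'] at this
  -- the idempotent matrix
  set f : (Fin n → R) →ₗ[R] (Fin n → R) := s ∘ₗ π with hf
  set E : Matrix (Fin n) (Fin n) R := LinearMap.toMatrixRight' f with hE
  have hEf : E.vecMulLinear = f := LinearMap.toMatrixRight'.symm_apply_apply f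
  have hvE : ∀ v, Matrix.vecMul v E = f v := fun v => by
    rw [← Matrix.vecMulLinear_apply, hEf]
  have hEE : E * E = E := by
    apply LinearMap.toMatrixRight'.symm.injective
    refine LinearMap.ext fun v => ?_
    show Matrix.vecMul v (E * E) = Matrix.vecMul v E
    rw [← Matrix.vecMul_vecMul]
    simp only [hvE]
    simp only [hf, LinearMap.comp_apply, hs']
  -- Q ≃ range of E.vecMulLinear
  have hrange : LinearMap.range E.vecMulLinear = LinearMap.range s := by
    rw [hEf, hf, LinearMap.range_comp, LinearMap.range_eq_top.mpr hπ, Submodule.map_top]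
  have e : Q ≃ₗ[R] LinearMap.range E.vecMulLinear :=
    (LinearEquiv.ofInjective s hsinj).trans (LinearEquiv.ofEq _ _ hrange.symm)
  -- I • ⊤ = ⊤ in the range
  have hItop : augIdeal G • (⊤ : Submodule R (LinearMap.range E.vecMulLinear)) = ⊤ := by
    have := congrArg (Submodule.map (e : Q →ₗ[R] LinearMap.range E.vecMulLinear)) hIQ
    rwa [Submodule.map_smul'', Submodule.map_top, LinearEquiv.range] at this
  -- hence the quotient is subsingleton and has finrank 0
  have hsub : Subsingleton ((LinearMap.range E.vecMulLinear) ⧸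
      (augIdeal G • (⊤ : Submodule R (LinearMap.range E.vecMulLinear)))) := by
    rw [Submodule.Quotient.subsingleton_iff]; exact hItop
  have hfr : Module.finrank ℤ ((LinearMap.range E.vecMulLinear) ⧸
      (augIdeal G • (⊤ : Submodule R (LinearMap.range E.vecMulLinear)))) = 0 :=
    Module.finrank_zero_of_subsingleton
  -- the free module over L has rank 0, so the range over L is trivial
  obtain ⟨ψ⟩ := hfree n E hEE
  have hLsub : Subsingleton (LinearMap.range (E.map φ).vecMulLinear) := by
    have : Subsingleton (Fin (Module.finrank ℤ ((LinearMap.range E.vecMulLinear) ⧸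
        (augIdeal G • (⊤ : Submodule R (LinearMap.range E.vecMulLinear))))) → L) := by
      rw [hfr]
      exact ⟨fun a b => funext fun i => i.elim0⟩
    exact ψ.toEquiv.subsingleton
  -- hence E.map φ = 0, hence E = 0
  have hEmap : E.map φ = 0 := by
    ext i j
    have h0 : ((E.map φ).vecMulLinear (Pi.single i 1)) = 0 := by
      have := @Subsingleton.elim _ hLsub
        ⟨(E.map φ).vecMulLinear (Pi.single i 1), LinearMap.mem_range_self _ _⟩ ⟨0, by simp⟩
      exact Subtype.ext_iff.mp this
    have := congrArg (· j) h0
    simpa [Matrix.vecMulLinear_apply, Matrix.single_one_vecMul] using this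
  have hE0 : E = 0 := by
    apply Matrix.ext
    intro i j
    apply hφ
    have := congrArg (fun M => M i j) hEmap
    simpa [Matrix.map_apply] using this
  -- hence the range over R is trivial, and so is Q
  have : Subsingleton (LinearMap.range E.vecMulLinear) := by
    rw [hE0]
    have hker : ∀ v : Fin n → R, (0 : Matrix (Fin n) (Fin n) R).vecMulLinear v = 0 := by
      intro v; simp [Matrix.vecMulLinear_apply]
    constructor
    rintro ⟨a, v, rfl⟩ ⟨b, w, rfl⟩
    simp [hker]
  exact e.toEquiv.subsingleton
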